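/- Let M be a symplectic matroid with bases B and circuits C. If P is an admissible subset of E_{±n} with |P| < |B| for some (equivalently every) B ∈ B, then P does not span every element of E_{±n} − (P ∪ P*); that is, there exists x ∈ E_{±n} − (P ∪ P*) such that no circuit J satisfies J − P = {x}. -/

import Mathlib

open Finset

/-- The ground set `E_{±n} = [n] ∪ [n]*`, where `(i, false)` denotes `i`
and `(i, true)` denotes `i*`. -/
abbrev EE (n : ℕ) := Fin n × Bool

/-- The involution `* : E_{±n} → E_{±n}`. -/
def estar {n : ℕ} (x : EE n) : EE n := (x.1, !x.2)

/-- `S* = {x* : x ∈ S}`. -/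
def starSet {n : ℕ} (S : Finset (EE n)) : Finset (EE n) := S.image estar

/-- A set is admissible if `S ∩ S* = ∅`. -/
def Admissible {n : ℕ} (S : Finset (EE n)) : Prop := Disjoint S (starSet S)

/-- An admissible ordering of `E_{±n}`, encoded by an injective rank function `w`
such that `x < y` implies `y* < x*`. -/
structure AdmOrdering (n : ℕ) where
  w : EE n → ℕ
  inj : Function.Injective w
  rev : ∀ x y, w x < w y → w (estar y) < w (estar x)

/-- The induced (componentwise) partial order on subsets:
compare the sorted lists of ranks entrywise. -/
def setLE {n : ℕ} (o : AdmOrdering n) (A B : Finset (EE n)) : Prop :=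
  List.Forall₂ (· ≤ ·) (Finset.sort (A.image o.w) (· ≤ ·)) (Finset.sort (B.image o.w) (· ≤ ·))

/-- The Maximality Property: for every admissible ordering, the family has a
unique maximal member in the induced partial order. -/
def HasUniqueMaximal {n : ℕ} (𝓑 : Set (Finset (EE n))) : Prop :=
  ∀ o : AdmOrdering n, ∃! M, M ∈ 𝓑 ∧ ∀ S ∈ 𝓑, setLE o M S → M = S

/-- A symplectic matroid: a nonempty family of equinumerous admissible subsets of
`E_{±n}` with a unique maximal member under every admissible ordering. -/
def IsSymplecticMatroid {n : ℕ} (𝓑 : Set (Finset (EE n))) : Prop :=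
  𝓑.Nonempty ∧ (∀ S ∈ 𝓑, Admissible S) ∧ (∀ S ∈ 𝓑, ∀ T ∈ 𝓑, S.card = T.card) ∧
    HasUniqueMaximal 𝓑

/-- The circuits of a family of bases: minimal admissible subsets of `E_{±n}`
contained in no member of `𝓑`. -/
def Circuits {n : ℕ} (𝓑 : Set (Finset (EE n))) : Set (Finset (EE n)) :=
  {C | Admissible C ∧ (∀ B ∈ 𝓑, ¬ C ⊆ B) ∧
    ∀ D ⊂ C, Admissible D → ∃ B ∈ 𝓑, D ⊆ B}

/-- The bases determined by a circuit family: maximal admissible subsets of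
`E_{±n}` containing no member of `𝓒`. -/
def BasesOf {n : ℕ} (𝓒 : Set (Finset (EE n))) : Set (Finset (EE n)) :=
  {B | Admissible B ∧ (∀ C ∈ 𝓒, ¬ C ⊆ B) ∧
    ∀ D, B ⊂ D → Admissible D → ∃ C ∈ 𝓒, C ⊆ D}

/-- `P` spans `x` if some `J ∈ 𝓒` has `J − P = {x}`. -/
def Spans {n : ℕ} (𝓒 : Set (Finset (EE n))) (P : Finset (EE n)) (x : EE n) : Prop :=
  ∃ J ∈ 𝓒, J \ P = {x}

/-- Axiom (SC1). -/
def SC1 {n : ℕ} (𝓒 : Set (Finset (EE n))) : Prop := ∅ ∉ 𝓒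

/-- Axiom (SC2). -/
def SC2 {n : ℕ} (𝓒 : Set (Finset (EE n))) : Prop :=
  ∀ C₁ ∈ 𝓒, ∀ C₂ ∈ 𝓒, C₁ ⊆ C₂ → C₁ = C₂

/-- Axiom (SC3): circuit elimination when the union is admissible. -/
def SC3 {n : ℕ} (𝓒 : Set (Finset (EE n))) : Prop :=
  ∀ C₁ ∈ 𝓒, ∀ C₂ ∈ 𝓒, C₁ ≠ C₂ → Admissible (C₁ ∪ C₂) →
    ∀ x ∈ C₁ ∩ C₂, ∃ C ∈ 𝓒, C ⊆ (C₁ ∪ C₂) \ {x}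

/-- Axiom (SC4): no small admissible set spans all of `E_{±n} − (P ∪ P*)`. -/
def SC4 {n : ℕ} (𝓒 : Set (Finset (EE n))) : Prop :=
  ∀ P : Finset (EE n), Admissible P → ∀ B ∈ BasesOf 𝓒, P.card < B.card →
    ∃ x, x ∉ P ∪ starSet P ∧ ¬ Spans 𝓒 P x

section SC4Auxiliary

-- auxiliary lemmas

lemma forall₂_le_trans : ∀ {l m k : List ℕ}, List.Forall₂ (· ≤ ·) l m →
    List.Forall₂ (· ≤ ·) m k → List.Forall₂ (· ≤ ·) l k := by
  intro l m k h
  induction h generalizing k with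
  | nil => intro h2; cases h2; exact List.Forall₂.nil
  | cons hab h ih =>
    intro h2
    cases h2 with
    | cons hbc h2 => exact List.Forall₂.cons (le_trans hab hbc) (ih h2)

lemma forall₂_sum_le : ∀ {l m : List ℕ}, List.Forall₂ (· ≤ ·) l m → l.sum ≤ m.sum := by
  intro l m h
  induction h with
  | nil => simp
  | cons hab h ih => simp only [List.sum_cons]; omega

lemma forall₂_eq_of_sum : ∀ {l m : List ℕ}, List.Forall₂ (· ≤ ·) l m → l.sum = m.sum → l = m := by
  intro l m h
  induction h with
  | nil => intro _; rfl
  | @cons a b l' m' hab h ih =>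
    intro hs
    simp only [List.sum_cons] at hs
    have h1 := forall₂_sum_le h
    have h2 : a = b ∧ l'.sum = m'.sum := by omega
    rw [h2.1, ih h2.2]

lemma forall₂_countP_le (c : ℕ) : ∀ {l m : List ℕ}, List.Forall₂ (· ≤ ·) l m →
    l.countP (fun v => decide (c ≤ v)) ≤ m.countP (fun v => decide (c ≤ v)) := by
  intro l m h
  induction h with
  | nil => simp
  | @cons a b l' m' hab h ih =>
    simp only [List.countP_cons]
    have : (if decide (c ≤ a) = true then 1 else 0) ≤ (if decide (c ≤ b) = true then 1 else 0) := by
      by_cases hca : c ≤ a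
      · simp [hca, le_trans hca hab]
      · simp [hca]
    omega

lemma setLE_refl {n : ℕ} (o : AdmOrdering n) (S : Finset (EE n)) : setLE o S S :=
  List.forall₂_same.mpr fun _ _ => le_rfl

lemma setLE_trans {n : ℕ} {o : AdmOrdering n} {S T U : Finset (EE n)} :
    setLE o S T → setLE o T U → setLE o S U := forall₂_le_trans

lemma eq_of_setLE_sum {n : ℕ} (o : AdmOrdering n) {S T : Finset (EE n)}
    (h : setLE o S T)
    (hs : (Finset.sort (S.image o.w) (· ≤ ·)).sum = (Finset.sort (T.image o.w) (· ≤ ·)).sum) :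
    S = T := by
  have hl := forall₂_eq_of_sum h hs
  have himg : S.image o.w = T.image o.w := by
    apply Finset.val_inj.mp
    have := congrArg (fun l : List ℕ => (↑l : Multiset ℕ)) hl
    simpa [Finset.sort_eq] using this
  exact Finset.image_injective o.inj himg

lemma exists_maximum {n : ℕ} {𝓑 : Set (Finset (EE n))} (hne : 𝓑.Nonempty)
    (hu : HasUniqueMaximal 𝓑) (o : AdmOrdering n) :
    ∃ M ∈ 𝓑, ∀ S ∈ 𝓑, setLE o S M := by
  classical
  obtain ⟨M, ⟨hM, _⟩, huniq⟩ := hu o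
  refine ⟨M, hM, fun S hS => ?_⟩
  obtain ⟨T, hT, hTmax⟩ := Set.exists_max_image {T | T ∈ 𝓑 ∧ setLE o S T}
      (fun T => (Finset.sort (T.image o.w) (· ≤ ·)).sum) (Set.toFinite _)
      ⟨S, hS, setLE_refl o S⟩
  obtain ⟨hT𝓑, hST⟩ := hT
  have hTM : T = M := by
    apply huniq
    refine ⟨hT𝓑, fun U hU hTU => ?_⟩
    have hSU : setLE o S U := setLE_trans hST hTU
    have h1 := hTmax U ⟨hU, hSU⟩
    have h2 := forall₂_sum_le hTU
    exact eq_of_setLE_sum o hTU (le_antisymm h2 h1)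
  rw [← hTM]; exact hST

lemma card_filter_eq_countP {n : ℕ} (o : AdmOrdering n) (S : Finset (EE n)) (c : ℕ) :
    (S.filter (fun e => c ≤ o.w e)).card
      = (Finset.sort (S.image o.w) (· ≤ ·)).countP (fun v => decide (c ≤ v)) := by
  classical
  have h1 : ((S.image o.w).filter (fun v => c ≤ v)) = (S.filter (fun e => c ≤ o.w e)).image o.w :=
    Finset.filter_image
  have h2 : (S.filter (fun e => c ≤ o.w e)).card
      = ((S.image o.w).filter (fun v => c ≤ v)).card := by
    rw [h1, Finset.card_image_of_injective _ o.inj]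
  rw [h2]
  have h3 : (Finset.sort (S.image o.w) (· ≤ ·)).countP (fun v => decide (c ≤ v))
      = Multiset.countP (fun v => c ≤ v) (S.image o.w).val := by
    rw [← Finset.sort_eq (s := S.image o.w) (r := (· ≤ ·)), Multiset.coe_countP]
  rw [h3, Multiset.countP_eq_card_filter]
  rfl

lemma card_filter_le_of_setLE {n : ℕ} (o : AdmOrdering n) {S M : Finset (EE n)}
    (h : setLE o S M) (c : ℕ) :
    (S.filter fun e => c ≤ o.w e).card ≤ (M.filter fun e => c ≤ o.w e).card := by
  rw [card_filter_eq_countP, card_filter_eq_countP]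
  exact forall₂_countP_le c h


lemma bool_eq_of_ne_ne {a b c : Bool} (h1 : a ≠ c) (h2 : b ≠ c) : a = b := by
  cases a <;> cases b <;> cases c <;> simp_all

lemma bool_not_ne_of_eq {a c : Bool} (h : a = c) : (!a) ≠ c := by
  cases a <;> cases c <;> simp_all

lemma bool_not_eq_of_ne {a c : Bool} (h : a ≠ c) : (!a) = c := by
  cases a <;> cases c <;> simp_all

lemma key_ordering {n : ℕ} (P Jx : Finset (EE n)) (x : EE n)
    (hJxP : Jx ⊆ P) (hPadm : Admissible P) (hx : x ∉ P ∪ starSet P) :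
    ∃ o : AdmOrdering n, (∀ e, 5 * n + 1 ≤ o.w e ↔ e ∈ Jx) ∧
      (∀ e, 4 * n + 1 ≤ o.w e ↔ (e ∈ P ∨ e = x)) := by
  classical
  have hpair : ∀ e ∈ P, e.1 ≠ x.1 := by
    intro e he hfst
    have hx2 : x.2 = e.2 ∨ x.2 = !e.2 := by cases x.2 <;> cases e.2 <;> simp
    rcases hx2 with h2 | h2
    · exact hx (Finset.mem_union_left _ (by
        have hxe : x = e := Prod.ext hfst.symm h2
        rw [hxe]; exact he))
    · refine hx (Finset.mem_union_right _ ?_)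
      have hxe : x = estar e := Prod.ext hfst.symm h2
      rw [hxe]; exact Finset.mem_image_of_mem _ he
  set s : Fin n → Bool := fun i => if (i, true) ∈ P then true else if i = x.1 then x.2 else false
    with hs
  have hsP : ∀ e ∈ P, s e.1 = e.2 := by
    intro e he
    by_cases h1 : (e.1, true) ∈ P
    · have h2 : e.2 = true := by
        by_contra hb
        have hb : e.2 = false := by simpa using hb
        have hst : estar e ∈ starSet P := Finset.mem_image_of_mem _ he
        have heq : estar e = (e.1, true) := by simp [estar, hb]
        rw [heq] at hst
        exact (Finset.disjoint_left.mp hPadm h1) hst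
      simp [hs, h1, h2]
    · have h2 : e.2 = false := by
        by_contra hb
        have hb : e.2 = true := by simpa using hb
        apply h1
        rw [← hb]
        exact he
      have h3 : ¬ (e.1 = x.1) := hpair e he
      simp [hs, h1, h3, h2]
  have hsx : s x.1 = x.2 := by
    have h1 : (x.1, true) ∉ P := fun hmem => hpair _ hmem rfl
    simp [hs, h1]
  have hxP : x ∉ P := fun hmem => hx (Finset.mem_union_left _ hmem)
  set k : Fin n → ℕ := fun i =>
    if (i, s i) ∈ Jx then 2 else if ((i, s i) ∈ P ∨ i = x.1) then 1 else 0 with hk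
  have hk2 : ∀ i, k i ≤ 2 := by
    intro i; simp only [hk]; split_ifs <;> omega
  set key : Fin n → ℕ := fun i => n * k i + i.val with hkey
  have hkeylt : ∀ i, key i < 3 * n := by
    intro i
    have h1 : n * k i ≤ n * 2 := Nat.mul_le_mul le_rfl (hk2 i)
    have h2 := i.isLt
    simp only [hkey]; omega
  have hkeyinj : ∀ i j, key i = key j → i = j := by
    intro i j hij
    have hi := i.isLt
    have hj := j.isLt
    simp only [hkey] at hij
    have hkk : k i = k j := by
      rcases Nat.lt_trichotomy (k i) (k j) with hlt | heq | hlt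
      · exfalso
        have : n * (k i + 1) ≤ n * k j := Nat.mul_le_mul le_rfl hlt
        have : n * k i + n ≤ n * k j := by rw [Nat.mul_add, Nat.mul_one] at this; omega
        omega
      · exact heq
      · exfalso
        have : n * (k j + 1) ≤ n * k i := Nat.mul_le_mul le_rfl hlt
        have : n * k j + n ≤ n * k i := by rw [Nat.mul_add, Nat.mul_one] at this; omega
        omega
    rw [hkk] at hij
    exact Fin.ext (by omega)
  set w : EE n → ℕ := fun e => if e.2 = s e.1 then 3 * n + 1 + key e.1 else 3 * n - key e.1
    with hw
  have hwinj : Function.Injective w := by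
    rintro ⟨i, b⟩ ⟨j, b'⟩ hee
    have hki := hkeylt i
    have hkj := hkeylt j
    simp only [hw] at hee
    by_cases h1 : b = s i <;> by_cases h2 : b' = s j
    · rw [if_pos h1, if_pos h2] at hee
      have hij : i = j := hkeyinj i j (by omega)
      subst hij
      exact Prod.ext rfl (h1.trans h2.symm)
    · rw [if_pos h1, if_neg h2] at hee; omega
    · rw [if_neg h1, if_pos h2] at hee; omega
    · rw [if_neg h1, if_neg h2] at hee
      have hij : i = j := hkeyinj i j (by omega)
      subst hij
      exact Prod.ext rfl (bool_eq_of_ne_ne h1 h2)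
  have hwsum : ∀ e, w e + w (estar e) = 6 * n + 1 := by
    rintro ⟨i, b⟩
    have hki := hkeylt i
    simp only [estar, hw]
    by_cases h : b = s i
    · rw [if_pos h, if_neg (bool_not_ne_of_eq h)]
      omega
    · rw [if_neg h, if_pos (bool_not_eq_of_ne h)]
      omega
  have hwle : ∀ e, w e ≤ 6 * n + 1 := by
    intro e
    have := hwsum e; omega
  have hrev : ∀ a b, w a < w b → w (estar b) < w (estar a) := by
    intro a b hab
    have h1 := hwsum a
    have h2 := hwsum b
    omega
  have hchar2 : ∀ e, 5 * n + 1 ≤ w e ↔ e ∈ Jx := by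
    rintro ⟨i, b⟩
    have hki := hkeylt i
    have hi := i.isLt
    have hk2i := hk2 i
    constructor
    · intro hle
      simp only [hw] at hle
      by_cases h : b = s i
      · rw [if_pos h] at hle
        have hkval : k i = 2 := by
          simp only [hkey] at hle hki
          rcases (by omega : k i = 0 ∨ k i = 1 ∨ k i = 2) with h3 | h3 | h3 <;>
            rw [h3] at hle <;> omega
        have hmem : (i, s i) ∈ Jx := by
          by_contra hc
          simp only [hk] at hkval
          rw [if_neg hc] at hkval
          split_ifs at hkval <;> omega
        rw [h]; exact hmem
      · rw [if_neg h] at hle; omega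
    · intro hmem
      have hb : s i = b := hsP (i, b) (hJxP hmem)
      have hkval : k i = 2 := by
        simp only [hk]
        rw [if_pos (by rw [hb]; exact hmem)]
      simp only [hw]
      rw [if_pos hb.symm]
      simp only [hkey, hkval]
      omega
  have hchar1 : ∀ e, 4 * n + 1 ≤ w e ↔ ((e : EE n) ∈ P ∨ e = x) := by
    rintro ⟨i, b⟩
    have hki := hkeylt i
    have hi := i.isLt
    have hk2i := hk2 i
    constructor
    · intro hle
      simp only [hw] at hle
      by_cases h : b = s i
      · rw [if_pos h] at hle
        have hkval : 1 ≤ k i := by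
          simp only [hkey] at hle
          by_contra hc
          have h0 : k i = 0 := by omega
          rw [h0] at hle; omega
        by_cases hA : (i, s i) ∈ Jx
        · left; rw [h]; exact hJxP hA
        by_cases hBc : (i, s i) ∈ P ∨ i = x.1
        · rcases hBc with hB | hB
          · left; rw [h]; exact hB
          · right
            have h2 : s i = x.2 := by rw [hB]; exact hsx
            rw [h]
            exact Prod.ext hB h2
        · exfalso
          simp only [hk] at hkval
          rw [if_neg hA, if_neg hBc] at hkval
          omega
      · rw [if_neg h] at hle; omega
    · intro hmem
      rcases hmem with hmem | hmem
      · have hb : s i = b := hsP (i, b) hmem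
        have hkval : 1 ≤ k i := by
          simp only [hk]
          split_ifs with hA hB
          · omega
          · omega
          · exact absurd (Or.inl (by rw [hb]; exact hmem)) hB
        simp only [hw]
        rw [if_pos hb.symm]
        have h1 : n * 1 ≤ n * k i := Nat.mul_le_mul le_rfl hkval
        simp only [hkey]
        omega
      · subst hmem
        simp only [hw]
        rw [if_pos hsx.symm]
        have hkval : 1 ≤ k i := by
          simp only [hk]
          split_ifs with hA hB
          · omega
          · omega
          · exact absurd (Or.inr (by trivial)) hB
        have h1 : n * 1 ≤ n * k i := Nat.mul_le_mul le_rfl hkval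
        simp only [hkey]
        omega
  exact ⟨⟨w, hwinj, hrev⟩, hchar2, hchar1⟩


lemma estar_estar {n : ℕ} (e : EE n) : estar (estar e) = e := by
  cases e; simp [estar]

lemma admissible_subset {n : ℕ} {S T : Finset (EE n)} (hST : S ⊆ T) (hT : Admissible T) :
    Admissible S :=
  Disjoint.mono hST (Finset.image_subset_image hST) hT

lemma card_inter_le {n : ℕ} {Bs P : Finset (EE n)} (hB : Admissible Bs) :
    (Bs ∩ (P ∪ starSet P)).card ≤ P.card := by
  classical
  apply Finset.card_le_card_of_injOn (fun e => if e ∈ P then e else estar e)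
  · intro e he
    simp only [Finset.mem_coe, Finset.mem_inter, Finset.mem_union] at he
    by_cases h : e ∈ P
    · simpa [h]
    · simp only [if_neg h]
      rcases he.2 with h1 | h1
      · exact absurd h1 h
      · obtain ⟨p, hp, hpe⟩ := Finset.mem_image.mp h1
        rw [← hpe, estar_estar]
        exact hp
  · intro a ha b hb hab
    simp only [Finset.coe_inter, Set.mem_inter_iff, Finset.mem_coe, Finset.mem_inter] at ha hb
    have haB : a ∈ Bs := ha.1
    have hbB : b ∈ Bs := hb.1
    by_cases h1 : a ∈ P <;> by_cases h2 : b ∈ P <;>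
      simp only [h1, h2, if_true, if_false, ite_true, ite_false] at hab
    · exact hab
    · exfalso
      have : a ∈ starSet Bs := by
        rw [hab]
        exact Finset.mem_image_of_mem _ hbB
      exact Finset.disjoint_left.mp hB haB this
    · exfalso
      have : b ∈ starSet Bs := by
        rw [← hab]
        exact Finset.mem_image_of_mem _ haB
      exact Finset.disjoint_left.mp hB hbB this
    · have := congrArg estar hab
      rwa [estar_estar, estar_estar] at this

end SC4Auxiliary

/-- SC4 for symplectic matroids: an admissible set smaller than a
basis does not span all of `E_{±n} − (P ∪ P*)`. -/
theorem circuits_SC4 {n : ℕ} (𝓑 : Set (Finset (EE n)))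
    (h : IsSymplecticMatroid 𝓑) (P : Finset (EE n)) (hP : Admissible P)
    (B : Finset (EE n)) (hB : B ∈ 𝓑) (hcard : P.card < B.card) :
    ∃ x, x ∉ P ∪ starSet P ∧ ¬ Spans (Circuits 𝓑) P x := by
  classical
  by_contra h0
  push_neg at h0
  obtain ⟨hne, hadm, hcards, hmaxprop⟩ := h
  obtain ⟨M₀, hM₀, hM₀max⟩ := Set.exists_max_image 𝓑 (fun T => (T ∩ P).card)
    (Set.toFinite _) hne
  have hM₀card : M₀.card = B.card := hcards M₀ hM₀ B hB
  have hnotsub : ¬ M₀ ⊆ P ∪ starSet P := by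
    intro hsub
    have h1 : M₀ ∩ (P ∪ starSet P) = M₀ := Finset.inter_eq_left.mpr hsub
    have h2 := card_inter_le (P := P) (hadm M₀ hM₀)
    rw [h1] at h2
    omega
  obtain ⟨x, hxM₀, hxPP⟩ := Finset.not_subset.mp hnotsub
  have hxP : x ∉ P := fun hmem => hxPP (Finset.mem_union_left _ hmem)
  obtain ⟨J, hJC, hJP⟩ := h0 x hxPP
  obtain ⟨hJadm, hJnot, hJmin⟩ := hJC
  have hxJ : x ∈ J := by
    have : x ∈ J \ P := by rw [hJP]; exact Finset.mem_singleton_self x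
    exact (Finset.mem_sdiff.mp this).1
  have hJxP : J.erase x ⊆ P := by
    intro e he
    obtain ⟨hne', heJ⟩ := Finset.mem_erase.mp he
    by_contra hep
    have : e ∈ J \ P := Finset.mem_sdiff.mpr ⟨heJ, hep⟩
    rw [hJP] at this
    exact hne' (Finset.mem_singleton.mp this)
  have hJxadm : Admissible (J.erase x) := admissible_subset (Finset.erase_subset _ _) hJadm
  obtain ⟨B₁, hB₁, hJxB₁⟩ := hJmin (J.erase x) (Finset.erase_ssubset hxJ) hJxadm
  obtain ⟨o, hc2, hc1⟩ := key_ordering P (J.erase x) x hJxP hP hxPP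
  obtain ⟨M, hM, hMmax⟩ := exists_maximum hne hmaxprop o
  -- J.erase x ⊆ M
  have hJxM : J.erase x ⊆ M := by
    have h1 := card_filter_le_of_setLE o (hMmax B₁ hB₁) (5 * n + 1)
    have e1 : B₁.filter (fun e => 5 * n + 1 ≤ o.w e) = J.erase x := by
      ext e
      simp only [Finset.mem_filter, hc2]
      exact ⟨fun he => he.2, fun he => ⟨hJxB₁ he, he⟩⟩
    have e2 : M.filter (fun e => 5 * n + 1 ≤ o.w e) = M ∩ J.erase x := by
      ext e
      simp only [Finset.mem_filter, hc2, Finset.mem_inter]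
    rw [e1, e2] at h1
    have h3 : M ∩ J.erase x ⊆ J.erase x := Finset.inter_subset_right
    have h4 : M ∩ J.erase x = J.erase x := Finset.eq_of_subset_of_card_le h3 h1
    rw [← h4]
    exact Finset.inter_subset_left
  have hxM : x ∉ M := by
    intro hxM
    apply hJnot M hM
    intro e heJ
    by_cases he : e = x
    · rw [he]; exact hxM
    · exact hJxM (Finset.mem_erase.mpr ⟨he, heJ⟩)
  -- the c₁ comparison
  have h2 := card_filter_le_of_setLE o (hMmax M₀ hM₀) (4 * n + 1)
  have e3 : M₀.filter (fun e => 4 * n + 1 ≤ o.w e) = M₀ ∩ insert x P := by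
    ext e
    simp only [Finset.mem_filter, hc1, Finset.mem_inter, Finset.mem_insert]
    tauto
  have e4 : M.filter (fun e => 4 * n + 1 ≤ o.w e) = M ∩ P := by
    ext e
    simp only [Finset.mem_filter, hc1, Finset.mem_inter]
    constructor
    · rintro ⟨heM, hmem | rfl⟩
      · exact ⟨heM, hmem⟩
      · exact absurd heM hxM
    · rintro ⟨heM, hmem⟩
      exact ⟨heM, Or.inl hmem⟩
  rw [e3, e4] at h2
  have e5 : M₀ ∩ insert x P = insert x (M₀ ∩ P) := by
    ext e
    simp only [Finset.mem_inter, Finset.mem_insert]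
    constructor
    · rintro ⟨heM, rfl | hmem⟩
      · exact Or.inl rfl
      · exact Or.inr ⟨heM, hmem⟩
    · rintro (rfl | ⟨heM, hmem⟩)
      · exact ⟨hxM₀, Or.inl rfl⟩
      · exact ⟨heM, Or.inr hmem⟩
  have e6 : x ∉ M₀ ∩ P := fun hmem => hxP (Finset.mem_inter.mp hmem).2
  rw [e5, Finset.card_insert_of_notMem e6] at h2
  have h5 : (M ∩ P).card ≤ (M₀ ∩ P).card := hM₀max M hM
  omega
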